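/- The map Γ(B,ℓ,a,b,L) = (B*(L,a,b,B), ℓ, a−L, b−L, −L) maps the domain D into itself and is an involution on D: for every (B,ℓ,a,b,L) ∈ D one has Γ(B,ℓ,a,b,L) ∈ D and Γ(Γ(B,ℓ,a,b,L)) = (B,ℓ,a,b,L). -/

import Mathlib

open MeasureTheory

noncomputable section

/-! ### Combinatorial definitions for NUTS orbit selection -/

/-- Floor midpoint `⌊(a+b)/2⌋`. -/
def mid (a b : ℤ) : ℤ := (a + b) / 2

/-- `(−1)^x` for a bit `x`. -/
def signBit (x : Bool) : ℤ := if x then -1 else 1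

/-- Left endpoint `a_ℓ(B)` of the orbit built from the Bernoulli directions `B` (1-indexed). -/
def aEnd (B : ℕ → Bool) : ℕ → ℤ
  | 0 => 0
  | ℓ + 1 => min (aEnd B ℓ) (aEnd B ℓ + signBit (B (ℓ + 1)) * 2 ^ ℓ)

/-- Right endpoint `b_ℓ(B)`. -/
def bEnd (B : ℕ → Bool) : ℕ → ℤ
  | 0 => 0
  | ℓ + 1 => max (bEnd B ℓ) (bEnd B ℓ + signBit (B (ℓ + 1)) * 2 ^ ℓ)

/-- Proposed extension endpoint `ã_ℓ(B) = a_{ℓ−1}(B) + (−1)^{B_ℓ} 2^{ℓ−1}` (for `ℓ ≥ 1`). -/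
def aT (B : ℕ → Bool) (ℓ : ℕ) : ℤ := aEnd B (ℓ - 1) + signBit (B ℓ) * 2 ^ (ℓ - 1)

/-- Proposed extension endpoint `b̃_ℓ(B) = b_{ℓ−1}(B) + (−1)^{B_ℓ} 2^{ℓ−1}` (for `ℓ ≥ 1`). -/
def bT (B : ℕ → Bool) (ℓ : ℕ) : ℤ := bEnd B (ℓ - 1) + signBit (B ℓ) * 2 ^ (ℓ - 1)

/-- The binary string `β(L,a,b)`: `beta ℓ L a b i` is the `i`-th bit (1-indexed) of
`(β_i(L,a,b))_{i ∈ [1:ℓ]}`, where `[a:b]` is an interval with `b − a + 1 = 2^ℓ`. -/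
def beta : ℕ → ℤ → ℤ → ℤ → ℕ → Bool
  | 0, _, _, _, _ => false
  | ℓ + 1, L, a, b, i =>
      if i = ℓ + 1 then decide (mid a b + 1 ≤ L)
      else if mid a b + 1 ≤ L then beta ℓ L (mid a b + 1) b i
      else beta ℓ L a (mid a b) i

/-- The transformed sequence `B*(L,a,b,B)`: bits `1..ℓ` come from `β(L,a,b)`, the rest from `B`. -/
def bstar (ℓ : ℕ) (L a b : ℤ) (B : ℕ → Bool) : ℕ → Bool :=
  fun i => if 1 ≤ i ∧ i ≤ ℓ then beta ℓ L a b i else B i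

/-- The domain `D`: tuples `(B, ℓ, a, b, L)` with `ℓ ∈ [1:M]`, `a = a_ℓ(B)`, `b = b_ℓ(B)`,
`a ≤ L ≤ b`. -/
def memD (M : ℕ) (B : ℕ → Bool) (ℓ : ℕ) (a b L : ℤ) : Prop :=
  1 ≤ ℓ ∧ ℓ ≤ M ∧ a = aEnd B ℓ ∧ b = bEnd B ℓ ∧ a ≤ L ∧ L ≤ b

/-- The levels of the binary tree of subintervals of `[a:b]`: `treeLevel a b k` is the family of
intervals (coded as pairs) obtained from `[a:b]` by `k` successive halvings; with
`b − a + 1 = 2^ℓ` this is `T_{ℓ−k}([a:b])` of the paper. -/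
def treeLevel (a b : ℤ) : ℕ → Set (ℤ × ℤ)
  | 0 => {(a, b)}
  | k + 1 => {p | ∃ q ∈ treeLevel a b k,
      p = (q.1, mid q.1 q.2) ∨ p = (mid q.1 q.2 + 1, q.2)}

/-- The binary tree `T([a:b]) = ∪_{j=0}^{ℓ} T_j([a:b])` of subintervals of an interval `[a:b]`
with `b − a + 1 = 2^ℓ`. -/
def tree (ℓ : ℕ) (a b : ℤ) : Set (ℤ × ℤ) := ⋃ k ≤ ℓ, treeLevel a b k

/-! ### Leapfrog dynamics -/

/-- The state space `ℝ^d`. -/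
abbrev ES (d : ℕ) := EuclideanSpace ℝ (Fin d)

/-- The momentum flip `S(θ,ρ) = (θ,−ρ)`. -/
def flipMom {d : ℕ} (p : ES d × ES d) : ES d × ES d := (p.1, -p.2)

/-- One leapfrog step of size `h` for the potential `U`. -/
def leapfrog {d : ℕ} (U : ES d → ℝ) (h : ℝ) (p : ES d × ES d) : ES d × ES d :=
  let ρh := p.2 - (h / 2) • gradient U p.1
  let θ' := p.1 + h • ρh
  (θ', ρh - (h / 2) • gradient U θ')

/-- Integer iterates `Φ_h^i`, `i ∈ ℤ`, of the leapfrog integrator (negative iterates use the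
inverse `S ∘ Φ_h ∘ S`). -/
def leapfrogIter {d : ℕ} (U : ES d → ℝ) (h : ℝ) : ℤ → ES d × ES d → ES d × ES d
  | Int.ofNat n => (leapfrog U h)^[n]
  | Int.negSucc n => (flipMom ∘ leapfrog U h ∘ flipMom)^[n + 1]

/-- The Hamiltonian `H(θ,ρ) = U(θ) + |ρ|²/2`. -/
def Ham {d : ℕ} (U : ES d → ℝ) (p : ES d × ES d) : ℝ := U p.1 + (1 / 2) * ‖p.2‖ ^ 2

open Classical in
/-- The U-turn indicator `𝟙_Uturn(a,b,θ,ρ,h,R)` (coarse step size `hs`, fine step `hs/R`). -/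
def uturnInd {d : ℕ} (U : ES d → ℝ) (hs : ℝ) (R : ℕ) (a b : ℤ) (p : ES d × ES d) : ℕ :=
  let qm := leapfrogIter U (hs / R) (R * a) p
  let qp := leapfrogIter U (hs / R) (R * b) p
  if (inner ℝ qp.2 (qp.1 - qm.1) : ℝ) < 0 ∨ (inner ℝ qm.2 (qp.1 - qm.1) : ℝ) < 0 then 1 else 0

/-- The sub-U-turn indicator `𝟙_subUturn(a,b,θ,ρ,h,R)`, defined recursively by halving. -/
def subUturnInd {d : ℕ} (U : ES d → ℝ) (hs : ℝ) (R : ℕ) (p : ES d × ES d) (a b : ℤ) : ℕ :=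
  if h : a < b then
    max (max (subUturnInd U hs R p a (mid a b)) (subUturnInd U hs R p (mid a b + 1) b))
      (uturnInd U hs R a b p)
  else 0
termination_by (b - a).toNat
decreasing_by
  · have h1 : a ≤ mid a b := by unfold mid; omega
    have h2 : mid a b < b := by unfold mid; omega
    omega
  · have h1 : a ≤ mid a b := by unfold mid; omega
    have h2 : mid a b < b := by unfold mid; omega
    omega

/-- The number of doublings `ℓ_min(θ,ρ,B,h,R)` selected by the no-U-turn procedure with at most
`2^M` leapfrog iterates. -/
def ellMin {d : ℕ} (U : ES d → ℝ) (hs : ℝ) (R : ℕ) (M : ℕ) (B : ℕ → Bool)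
    (p : ES d × ES d) : ℕ :=
  sInf ({ℓ | 1 ≤ ℓ ∧ ℓ ≤ M - 1 ∧
      (uturnInd U hs R (aEnd B ℓ) (bEnd B ℓ) p = 1 ∨
        subUturnInd U hs R p (aT B (ℓ + 1)) (bT B (ℓ + 1)) = 1)} ∪ {M})

/-- The categorical (Boltzmann) index-selection kernel `Q(L | θ, ρ, a, b, h, R)`. -/
def Qkernel {d : ℕ} (U : ES d → ℝ) (hs : ℝ) (R : ℕ) (p : ES d × ES d)
    (a b L : ℤ) : ℝ :=
  if a ≤ L ∧ L ≤ b then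
    Real.exp (-Ham U (leapfrogIter U (hs / R) (R * L) p)) /
      ∑ k ∈ Finset.Icc a b, Real.exp (-Ham U (leapfrogIter U (hs / R) (R * k) p))
  else 0

/-! ### The standard normal target -/

/-- One leapfrog step of size `h` for the standard normal potential `U(θ) = |θ|²/2`
(for which `∇U(θ) = θ`). -/
def gaussLeapfrog {d : ℕ} (h : ℝ) (p : ES d × ES d) : ES d × ES d :=
  let ρh := p.2 - (h / 2) • p.1
  let θ' := p.1 + h • ρh
  (θ', ρh - (h / 2) • θ')

/-- Integer iterates of the standard normal leapfrog integrator. -/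
def gaussLeapfrogIter {d : ℕ} (h : ℝ) : ℤ → ES d × ES d → ES d × ES d
  | Int.ofNat n => (gaussLeapfrog h)^[n]
  | Int.negSucc n => (flipMom ∘ gaussLeapfrog h ∘ flipMom)^[n + 1]

/-- The standard normal Hamiltonian `H(θ,ρ) = (|θ|² + |ρ|²)/2`. -/
def gaussHam {d : ℕ} (p : ES d × ES d) : ℝ := (1 / 2) * (‖p.1‖ ^ 2 + ‖p.2‖ ^ 2)

/-- The modified Hamiltonian `H_h(θ,ρ) = (1 − h²/4)|θ|²/2 + |ρ|²/2` preserved by the standard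
normal leapfrog integrator for `h ∈ (0,2)`. -/
def gaussHamMod {d : ℕ} (h : ℝ) (p : ES d × ES d) : ℝ :=
  (1 / 2) * (1 - h ^ 2 / 4) * ‖p.1‖ ^ 2 + (1 / 2) * ‖p.2‖ ^ 2

end

lemma ends_prop (B : ℕ → Bool) (ℓ : ℕ) :
    aEnd B ℓ ≤ 0 ∧ 0 ≤ bEnd B ℓ ∧ bEnd B ℓ = aEnd B ℓ + 2 ^ ℓ - 1 := by
  induction ℓ with
  | zero => simp [aEnd, bEnd]
  | succ n ih =>
    have h2 : (0:ℤ) < 2 ^ n := by positivity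
    have hs : signBit (B (n+1)) = 1 ∨ signBit (B (n+1)) = -1 := by
      cases B (n+1) <;> simp [signBit]
    rcases hs with h | h <;>
      simp only [aEnd, bEnd, h, pow_succ] at * <;> omega

lemma beta_shift (ℓ : ℕ) : ∀ L a b c i, beta ℓ (L + c) (a + c) (b + c) i = beta ℓ L a b i := by
  induction ℓ with
  | zero => intros; simp [beta]
  | succ n ih =>
    intro L a b c i
    have hm : mid (a + c) (b + c) = mid a b + c := by unfold mid; omega
    simp only [beta, hm]
    by_cases h : mid a b + 1 ≤ L
    · have h' : mid a b + c + 1 ≤ L + c := by omega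
      rw [if_pos h, if_pos h']
      by_cases hi : i = n + 1
      · simp [hi]
      · rw [if_neg hi, if_neg hi]
        have : mid a b + c + 1 = (mid a b + 1) + c := by ring
        rw [this]; exact ih L (mid a b + 1) b c i
    · have h' : ¬ (mid a b + c + 1 ≤ L + c) := by omega
      rw [if_neg h, if_neg h']
      by_cases hi : i = n + 1
      · simp [hi]
      · rw [if_neg hi, if_neg hi]; exact ih L a (mid a b) c i

lemma beta_aEnd (ℓ : ℕ) (B : ℕ → Bool) : ∀ i, 1 ≤ i → i ≤ ℓ →
    beta ℓ 0 (aEnd B ℓ) (bEnd B ℓ) i = B i := by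
  induction ℓ with
  | zero => omega
  | succ n ih =>
    intro i h1 h2
    obtain ⟨ha, hb, hab⟩ := ends_prop B n
    have h2n : (0:ℤ) < 2 ^ n := by positivity
    cases hB : B (n+1) with
    | true =>
      have hs : signBit (B (n+1)) = -1 := by simp [hB, signBit]
      have hA : aEnd B (n+1) = aEnd B n - 2 ^ n := by
        simp only [aEnd, hs]; omega
      have hBn : bEnd B (n+1) = bEnd B n := by
        simp only [bEnd, hs]; omega
      have hm : mid (aEnd B (n+1)) (bEnd B (n+1)) = aEnd B n - 1 := by
        rw [hA, hBn]; unfold mid; omega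
      by_cases hi : i = n + 1
      · subst hi
        simp only [beta, if_pos rfl, hm, hB]
        simp; omega
      · simp only [beta, if_neg hi, hm]
        rw [if_pos (by omega : aEnd B n - 1 + 1 ≤ (0:ℤ)), hBn]
        have he : aEnd B n - 1 + 1 = aEnd B n := by ring
        rw [he]
        exact ih i h1 (by omega)
    | false =>
      have hs : signBit (B (n+1)) = 1 := by simp [hB, signBit]
      have hA : aEnd B (n+1) = aEnd B n := by
        simp only [aEnd, hs]; omega
      have hBn : bEnd B (n+1) = bEnd B n + 2 ^ n := by
        simp only [bEnd, hs]; omega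
      have hm : mid (aEnd B (n+1)) (bEnd B (n+1)) = bEnd B n := by
        rw [hA, hBn]; unfold mid; omega
      by_cases hi : i = n + 1
      · subst hi
        simp only [beta, if_pos rfl, hm, hB]
        simp; omega
      · simp only [beta, if_neg hi, hm]
        rw [if_neg (by omega : ¬ (bEnd B n + 1 ≤ (0:ℤ))), hA]
        exact ih i h1 (by omega)

lemma aEnd_bstar : ∀ (ℓ : ℕ) (a b L : ℤ) (C : ℕ → Bool), b = a + 2 ^ ℓ - 1 → a ≤ L → L ≤ b →
    (∀ i, 1 ≤ i → i ≤ ℓ → C i = beta ℓ L a b i) →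
    aEnd C ℓ = a - L ∧ bEnd C ℓ = b - L := by
  intro ℓ
  induction ℓ with
  | zero =>
    intro a b L C hb ha hL _
    simp only [aEnd, bEnd, pow_zero] at *
    omega
  | succ n ih =>
    intro a b L C hb ha hL hC
    have h2n : (0:ℤ) < 2 ^ n := by positivity
    have hpow : (2:ℤ) ^ (n+1) = 2 ^ n + 2 ^ n := by rw [pow_succ]; ring
    have hm : mid a b = a + 2 ^ n - 1 := by unfold mid; omega
    have htop := hC (n+1) (by omega) (le_refl _)
    simp only [beta, if_pos rfl, hm] at htop
    by_cases hR : a + 2 ^ n - 1 + 1 ≤ L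
    · have htop' : C (n+1) = true := by rw [htop]; simp; omega
      have ihh := ih (a + 2 ^ n) b L C (by omega) (by omega) hL ?_
      · obtain ⟨ih1, ih2⟩ := ihh
        have hs : signBit (C (n+1)) = -1 := by simp [htop', signBit]
        constructor
        · simp only [aEnd, hs, ih1]; omega
        · simp only [bEnd, hs, ih2]; omega
      · intro i h1i h2i
        rw [hC i (by omega) (by omega)]
        simp only [beta, if_neg (by omega : ¬ (i = n+1)), hm, if_pos hR]
        have : a + 2 ^ n - 1 + 1 = a + 2 ^ n := by ring
        rw [this]
    · have htop' : C (n+1) = false := by rw [htop]; simp; omega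
      have ihh := ih a (a + 2 ^ n - 1) L C (by omega) ha (by omega) ?_
      · obtain ⟨ih1, ih2⟩ := ihh
        have hs : signBit (C (n+1)) = 1 := by simp [htop', signBit]
        constructor
        · simp only [aEnd, hs, ih1]; omega
        · simp only [bEnd, hs, ih2]; omega
      · intro i h1i h2i
        rw [hC i (by omega) (by omega)]
        simp only [beta, if_neg (by omega : ¬ (i = n+1)), hm, if_neg hR]


/-- The map `Γ(B,ℓ,a,b,L) = (B*(L,a,b,B), ℓ, a−L, b−L, −L)` maps the domain `D`
into itself and is an involution on `D`. -/
theorem Gamma_involution (M ℓ : ℕ) (B : ℕ → Bool) (a b L : ℤ) (hD : memD M B ℓ a b L) :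
    memD M (bstar ℓ L a b B) ℓ (a - L) (b - L) (-L) ∧
    bstar ℓ (-L) (a - L) (b - L) (bstar ℓ L a b B) = B ∧
    a - L - -L = a ∧ b - L - -L = b ∧ -(-L) = L := by
  obtain ⟨h1, h2, ha, hb, haL, hLb⟩ := hD
  obtain ⟨ha0, hb0, hab⟩ := ends_prop B ℓ
  have hsize : b = a + 2 ^ ℓ - 1 := by omega
  have hmain := aEnd_bstar ℓ a b L (bstar ℓ L a b B) hsize haL hLb
    (fun i hi1 hi2 => by simp [bstar, hi1, hi2])
  refine ⟨⟨h1, h2, hmain.1.symm, hmain.2.symm, by omega, by omega⟩, ?_, by ring, by ring, by ring⟩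
  funext i
  by_cases hi : 1 ≤ i ∧ i ≤ ℓ
  · simp only [bstar, if_pos hi]
    have hshift : beta ℓ (-L) (a - L) (b - L) i = beta ℓ 0 a b i := by
      have := beta_shift ℓ 0 a b (-L) i
      simpa [sub_eq_add_neg] using this
    rw [hshift, ha, hb]
    exact beta_aEnd ℓ B i hi.1 hi.2
  · simp only [bstar, if_neg hi]
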